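/- Let $z_1,\ldots,z_n$ be real random variables, $m\geq 1$ an integer, and $c>0$ a constant such that (i) $\mathbb{E}(z_i^{2m}) < c$ for all $i$, and (ii) there exists a sigma-algebra $\mathcal{F}$ with $\mathbb{E}(z_i\mid\mathcal{F})=0$ for all $i$ and $z_1,\ldots,z_n$ conditionally independent given $\mathcal{F}$. Then $\mathbb{E}\{(\sum_{i=1}^n z_i)^{2m}\} \leq c\, c_m n^m$, where $c_m$ is a constant depending only on $m$. -/

import Mathlib

open MeasureTheory ProbabilityTheory Filter
open scoped BigOperators

section AuxStmt0
open Set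


lemma aux_integrable_of_pow {Ω : Type*} [MeasurableSpace Ω] {μ : Measure Ω}
    [IsProbabilityMeasure μ] {X : Ω → ℝ} (hX : Measurable X) {N : ℕ} (hN : 1 ≤ N)
    (h : Integrable (fun ω => X ω ^ (2 * N)) μ) : Integrable X μ := by
  refine Integrable.mono' (g := fun ω => 1 + X ω ^ (2 * N)) ((integrable_const 1).add h)
    hX.aestronglyMeasurable (Filter.Eventually.of_forall fun ω => ?_)
  have h2 : (0:ℝ) ≤ X ω ^ (2 * N) := (even_two_mul N).pow_nonneg _
  rcases le_or_gt (|X ω|) 1 with hx | hx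
  · calc ‖X ω‖ ≤ 1 := hx
      _ ≤ 1 + X ω ^ (2 * N) := by linarith
  · have h3 : |X ω| ≤ |X ω| ^ (2 * N) := le_self_pow₀ hx.le (by omega)
    calc ‖X ω‖ ≤ |X ω| ^ (2 * N) := h3
      _ = X ω ^ (2 * N) := by rw [← abs_pow, abs_of_nonneg h2]
      _ ≤ 1 + X ω ^ (2 * N) := by linarith

lemma aux_prod_le_sum_pow {ι : Type*} (s : Finset ι) (hs : s.Nonempty) (a : ι → ℝ)
    (ha : ∀ i ∈ s, 0 ≤ a i) : ∏ i ∈ s, a i ≤ ∑ i ∈ s, a i ^ s.card := by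
  obtain ⟨i0, hi0, hmax⟩ := s.exists_max_image a hs
  calc ∏ i ∈ s, a i ≤ ∏ _i ∈ s, a i0 := Finset.prod_le_prod ha (fun i hi => hmax i hi)
    _ = a i0 ^ s.card := by rw [Finset.prod_const]
    _ ≤ ∑ i ∈ s, a i ^ s.card :=
        Finset.single_le_sum (f := fun i => a i ^ s.card)
          (fun i hi => pow_nonneg (ha i hi) _) hi0


lemma kernel_ae_indep {α Ω : Type*} {mα : MeasurableSpace α} {mΩ : MeasurableSpace Ω}
    {κ : Kernel α Ω} [IsMarkovKernel κ] {μ : Measure α}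
    {X Y : Ω → ℝ} (hX : Measurable X) (hY : Measurable Y)
    (h : Kernel.IndepFun X Y κ μ) :
    ∀ᵐ a ∂μ, IndepFun X Y (κ a) := by
  have h' : ∀ᵐ a ∂μ, ∀ (q r : ℚ),
      κ a (X ⁻¹' Set.Iic (q:ℝ) ∩ Y ⁻¹' Set.Iic (r:ℝ))
        = κ a (X ⁻¹' Set.Iic (q:ℝ)) * κ a (Y ⁻¹' Set.Iic (r:ℝ)) := by
    rw [ae_all_iff]; intro q; rw [ae_all_iff]; intro r
    exact h _ _ ⟨Set.Iic (q:ℝ), measurableSet_Iic, rfl⟩ ⟨Set.Iic (r:ℝ), measurableSet_Iic, rfl⟩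
  filter_upwards [h'] with a ha
  set p1 : Set (Set Ω) := (X ⁻¹' ·) '' (⋃ q : ℚ, {Set.Iic (q:ℝ)}) with hp1
  set p2 : Set (Set Ω) := (Y ⁻¹' ·) '' (⋃ q : ℚ, {Set.Iic (q:ℝ)}) with hp2
  have hgen1 : MeasurableSpace.comap X (borel ℝ) = MeasurableSpace.generateFrom p1 := by
    rw [Real.borel_eq_generateFrom_Iic_rat, MeasurableSpace.comap_generateFrom]
  have hgen2 : MeasurableSpace.comap Y (borel ℝ) = MeasurableSpace.generateFrom p2 := by
    rw [Real.borel_eq_generateFrom_Iic_rat, MeasurableSpace.comap_generateFrom]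
  have hpi1 : IsPiSystem p1 := by
    have := Real.isPiSystem_Iic_rat.comap X
    exact this
  have hpi2 : IsPiSystem p2 := by
    have := Real.isPiSystem_Iic_rat.comap Y
    exact this
  have hsets : IndepSets p1 p2 (κ a) := by
    rintro t1 t2 ⟨s1, hs1, rfl⟩ ⟨s2, hs2, rfl⟩
    simp only [Set.mem_iUnion, Set.mem_singleton_iff] at hs1 hs2
    obtain ⟨q, rfl⟩ := hs1
    obtain ⟨r, rfl⟩ := hs2
    refine Filter.Eventually.of_forall fun u => ?_
    simp only [Kernel.const_apply]
    exact ha q r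
  have hind : Indep (MeasurableSpace.generateFrom p1) (MeasurableSpace.generateFrom p2) (κ a) :=
    IndepSets.indep (by rw [← hgen1]; exact hX.comap_le) (by rw [← hgen2]; exact hY.comap_le)
      hpi1 hpi2 rfl rfl hsets
  show Indep (MeasurableSpace.comap X (borel ℝ)) (MeasurableSpace.comap Y (borel ℝ)) (κ a)
  rw [hgen1, hgen2]
  exact hind

lemma vanish {Ω : Type} {F : MeasurableSpace Ω} [mΩ : MeasurableSpace Ω] [StandardBorelSpace Ω]
    {μ : Measure Ω} [IsProbabilityMeasure μ] (hF : F ≤ mΩ)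
    {X Y : Ω → ℝ} (hX : Measurable X) (hY : Measurable Y)
    (hXint : Integrable X μ) (hXYint : Integrable (fun ω => X ω * Y ω) μ)
    (hX0 : μ[X|F] =ᵐ[μ] fun _ => (0:ℝ))
    (hind : Kernel.IndepFun X Y (condExpKernel μ F) (μ.trim hF)) :
    ∫ ω, X ω * Y ω ∂μ = 0 := by
  have hae : ∀ᵐ ω ∂μ, IndepFun X Y ((condExpKernel μ F) ω) :=
    ae_of_ae_trim hF (kernel_ae_indep hX hY hind)
  have h1 : μ[fun ω => X ω * Y ω|F] =ᵐ[μ] fun ω => ∫ y, X y * Y y ∂(condExpKernel μ F ω) :=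
    condExp_ae_eq_integral_condExpKernel hF hXYint
  have h2 : (fun ω => ∫ y, X y ∂(condExpKernel μ F ω)) =ᵐ[μ] fun _ => (0:ℝ) :=
    (condExp_ae_eq_integral_condExpKernel hF hXint).symm.trans hX0
  have h3 : μ[fun ω => X ω * Y ω|F] =ᵐ[μ] fun _ => (0:ℝ) := by
    filter_upwards [hae, h1, h2] with ω hωind h1ω h2ω
    rw [h1ω]
    have hmul := hωind.integral_mul_eq_mul_integral hX.aestronglyMeasurable hY.aestronglyMeasurable
    have : ∫ y, X y * Y y ∂(condExpKernel μ F ω) = ∫ y, (X * Y) y ∂(condExpKernel μ F ω) := rfl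
    rw [this, hmul, h2ω, zero_mul]
  calc ∫ ω, X ω * Y ω ∂μ = ∫ ω, (μ[fun ω' => X ω' * Y ω'|F]) ω ∂μ :=
        (integral_condExp hF).symm
    _ = 0 := by rw [integral_congr_ae h3, integral_const]; simp

lemma card_good_le (m n : ℕ) (hm : 1 ≤ m) (hn : 0 < n) :
    ((Finset.univ : Finset (Fin (2*m) → Fin n)).filter
      (fun f => ∀ k, 2 ≤ (Finset.univ.filter (fun k' => f k' = f k)).card)).card
      ≤ m ^ (2*m) * n ^ m := by
  classical
  have himg : ∀ f ∈ (Finset.univ : Finset (Fin (2*m) → Fin n)).filter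
      (fun f => ∀ k, 2 ≤ (Finset.univ.filter (fun k' => f k' = f k)).card),
      (Finset.image f Finset.univ).card ≤ m := by
    intro f hf
    rw [Finset.mem_filter] at hf
    have hsum : (Finset.univ : Finset (Fin (2*m))).card
        = ∑ b ∈ Finset.image f Finset.univ,
          ((Finset.univ : Finset (Fin (2*m))).filter (fun x => f x = b)).card :=
      Finset.card_eq_sum_card_fiberwise
        (fun x _ => Finset.mem_image_of_mem f (Finset.mem_univ x))
    have hge : ∀ b ∈ Finset.image f Finset.univ,
        2 ≤ ((Finset.univ : Finset (Fin (2*m))).filter (fun x => f x = b)).card := by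
      intro b hb
      obtain ⟨k, _, rfl⟩ := Finset.mem_image.mp hb
      exact hf.2 k
    have h2 : 2 * (Finset.image f Finset.univ).card ≤ 2 * m := by
      calc 2 * (Finset.image f Finset.univ).card
          = ∑ _b ∈ Finset.image f Finset.univ, 2 := by
            rw [Finset.sum_const]; ring
        _ ≤ ∑ b ∈ Finset.image f Finset.univ,
            ((Finset.univ : Finset (Fin (2*m))).filter (fun x => f x = b)).card :=
            Finset.sum_le_sum hge
        _ = 2 * m := by rw [← hsum]; simp
    omega
  set Φ : (Fin (2*m) → Fin n) → ((Fin (2*m) → Fin m) × (Fin m → Fin n)) :=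
    fun f =>
      if h : (Finset.image f Finset.univ).card ≤ m then
        (fun i => Fin.castLE h (((Finset.image f Finset.univ).orderIsoOfFin rfl).symm
            ⟨f i, Finset.mem_image_of_mem f (Finset.mem_univ i)⟩),
         fun j => if h2 : (j : ℕ) < (Finset.image f Finset.univ).card then
            ((((Finset.image f Finset.univ).orderIsoOfFin rfl) ⟨j, h2⟩ : {x // x ∈ Finset.image f Finset.univ}) : Fin n)
          else ⟨0, hn⟩)
      else (fun _ => ⟨0, hm⟩, fun _ => ⟨0, hn⟩) with hΦ
  have key : ∀ (f : Fin (2*m) → Fin n) (h : (Finset.image f Finset.univ).card ≤ m) (i : Fin (2*m)),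
      (Φ f).2 ((Φ f).1 i) = f i := by
    intro f h i
    simp only [hΦ, dif_pos h]
    have hmem : f i ∈ Finset.image f Finset.univ :=
      Finset.mem_image_of_mem f (Finset.mem_univ i)
    have hlt : ((Fin.castLE h (((Finset.image f Finset.univ).orderIsoOfFin rfl).symm
        ⟨f i, hmem⟩)) : ℕ) < (Finset.image f Finset.univ).card := by
      simp only [Fin.coe_castLE]
      exact ((((Finset.image f Finset.univ).orderIsoOfFin rfl).symm ⟨f i, hmem⟩)).isLt
    rw [dif_pos hlt]
    have heq : (⟨((Fin.castLE h (((Finset.image f Finset.univ).orderIsoOfFin rfl).symm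
        ⟨f i, hmem⟩)) : ℕ), hlt⟩ : Fin (Finset.image f Finset.univ).card)
        = ((Finset.image f Finset.univ).orderIsoOfFin rfl).symm ⟨f i, hmem⟩ := Fin.ext rfl
    rw [heq]
    simp
  calc ((Finset.univ : Finset (Fin (2*m) → Fin n)).filter
      (fun f => ∀ k, 2 ≤ (Finset.univ.filter (fun k' => f k' = f k)).card)).card
      ≤ (Finset.univ : Finset ((Fin (2*m) → Fin m) × (Fin m → Fin n))).card := by
        apply Finset.card_le_card_of_injOn Φ (fun f _ => Finset.mem_univ _)
        intro f hf g hg hfg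
        funext i
        have h1 := key f (himg f hf) i
        have h2 := key g (himg g hg) i
        rw [← h1, ← h2, hfg]
    _ = m ^ (2*m) * n ^ m := by
        simp [Fintype.card_fun]

theorem main_core (m : ℕ) (hm : 1 ≤ m)
    (Ω : Type) {F : MeasurableSpace Ω} [inst : MeasurableSpace Ω] [StandardBorelSpace Ω]
    (μ : Measure Ω) [IsProbabilityMeasure μ]
    (n : ℕ) (z : Fin n → Ω → ℝ) (c : ℝ)
    (hc : 0 < c)
    (hmeas : ∀ i, Measurable (z i))
    (hint : ∀ i, Integrable (fun ω => (z i ω) ^ (2 * m)) μ)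
    (hlt : ∀ i, ∫ ω, (z i ω) ^ (2 * m) ∂μ < c)
    (hF : F ≤ inst)
    (h0 : ∀ i, μ[z i | F] =ᵐ[μ] fun _ => (0 : ℝ))
    (hci : iCondIndepFun F hF (m := fun _ : Fin n => (inferInstance : MeasurableSpace ℝ)) z μ) :
    ∫ ω, (∑ i, z i ω) ^ (2 * m) ∂μ ≤ c * (2*m*(m:ℝ)^(2*m)) * (n : ℝ) ^ m := by
  classical
  rcases Nat.eq_zero_or_pos n with rfl | hn
  · have h2m : 2*m ≠ 0 := by omega
    have hmpos : (0:ℝ) < 2*m*(m:ℝ)^(2*m) := by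
      have : (0:ℝ) < (m:ℝ) := by exact_mod_cast hm
      positivity
    simp only [Finset.univ_eq_empty, Finset.sum_empty, zero_pow h2m, integral_zero,
      Nat.cast_zero, zero_pow (by omega : m ≠ 0), mul_zero]
    exact le_refl 0
  have hne : Nonempty (Fin (2*m)) := ⟨⟨0, by omega⟩⟩
  have heven : Even (2*m) := even_two_mul m
  -- pointwise bound on products
  have hptw : ∀ (f : Fin (2*m) → Fin n) (ω : Ω),
      ‖∏ k, z (f k) ω‖ ≤ ∑ k, (z (f k) ω) ^ (2*m) := by
    intro f ω
    calc ‖∏ k, z (f k) ω‖ = ∏ k, |z (f k) ω| := by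
          rw [Real.norm_eq_abs, Finset.abs_prod]
      _ ≤ ∑ k, |z (f k) ω| ^ (Finset.univ : Finset (Fin (2*m))).card :=
          aux_prod_le_sum_pow _ Finset.univ_nonempty _ (fun i _ => abs_nonneg _)
      _ = ∑ k, (z (f k) ω) ^ (2*m) := by
          rw [Finset.card_univ, Fintype.card_fin]
          exact Finset.sum_congr rfl fun k _ => heven.pow_abs _
  have hprodint : ∀ f : Fin (2*m) → Fin n, Integrable (fun ω => ∏ k, z (f k) ω) μ := by
    intro f
    exact Integrable.mono' (integrable_finset_sum _ fun k _ => hint (f k))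
      (Finset.measurable_prod _ (fun k _ => hmeas (f k))).aestronglyMeasurable
      (Filter.Eventually.of_forall (hptw f))
  have hbound : ∀ f : Fin (2*m) → Fin n, ∫ ω, ∏ k, z (f k) ω ∂μ ≤ 2*m*c := by
    intro f
    calc ∫ ω, ∏ k, z (f k) ω ∂μ ≤ ∫ ω, ∑ k, (z (f k) ω)^(2*m) ∂μ := by
          refine integral_mono (hprodint f) (integrable_finset_sum _ fun k _ => hint (f k))
            (fun ω => ?_)
          exact (le_abs_self _).trans (hptw f ω)
      _ = ∑ k, ∫ ω, (z (f k) ω)^(2*m) ∂μ := integral_finset_sum _ (fun k _ => hint (f k))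
      _ ≤ ∑ _k : Fin (2*m), c := Finset.sum_le_sum fun k _ => (hlt (f k)).le
      _ = 2*m*c := by
          rw [Finset.sum_const, Finset.card_univ, Fintype.card_fin, nsmul_eq_mul]
          push_cast; ring
  have hexp : ∫ ω, (∑ i, z i ω) ^ (2*m) ∂μ
      = ∑ f : Fin (2*m) → Fin n, ∫ ω, ∏ k, z (f k) ω ∂μ := by
    rw [← integral_finset_sum _ (fun f _ => hprodint f)]
    congr 1; funext ω
    exact Fintype.sum_pow (fun i => z i ω) (2*m)
  -- vanishing of bad terms
  have hzero : ∀ f : Fin (2*m) → Fin n,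
      (¬ ∀ k, 2 ≤ (Finset.univ.filter (fun k' => f k' = f k)).card) →
      ∫ ω, ∏ k, z (f k) ω ∂μ = 0 := by
    intro f hf
    push_neg at hf
    obtain ⟨k0, hk0⟩ := hf
    have hone : (Finset.univ.filter (fun k' => f k' = f k0)) = {k0} := by
      have hk0mem : k0 ∈ Finset.univ.filter (fun k' => f k' = f k0) := by simp
      have hcard : (Finset.univ.filter (fun k' => f k' = f k0)).card = 1 := by
        have := Finset.card_pos.mpr ⟨k0, hk0mem⟩; omega
      obtain ⟨a, ha⟩ := Finset.card_eq_one.mp hcard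
      rw [ha] at hk0mem ⊢
      rw [Finset.mem_singleton] at hk0mem
      rw [hk0mem]
    have hnej : ∀ k : Fin (2*m), k ≠ k0 → f k ≠ f k0 := by
      intro k hk hfeq
      have hmem : k ∈ Finset.univ.filter (fun k' => f k' = f k0) := by simp [hfeq]
      rw [hone, Finset.mem_singleton] at hmem
      exact hk hmem
    set Y : Ω → ℝ := fun ω => ∏ k ∈ Finset.univ.erase k0, z (f k) ω with hY
    have hmemT : ∀ k : {x // x ∈ Finset.univ.erase k0}, f k.1 ∈ Finset.univ.erase (f k0) := by
      intro k
      simp only [Finset.mem_erase, Finset.mem_univ, and_true]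
      exact hnej k.1 (Finset.mem_erase.mp k.2).1
    have hdisj : Disjoint ({f k0} : Finset (Fin n)) (Finset.univ.erase (f k0)) := by
      simp [Finset.disjoint_left]
    have h1 : Kernel.IndepFun (fun ω (i : ({f k0} : Finset (Fin n))) => z i ω)
        (fun ω (i : (Finset.univ.erase (f k0) : Finset (Fin n))) => z i ω)
        (condExpKernel μ F) (μ.trim hF) :=
      Kernel.iIndepFun.indepFun_finset {f k0} (Finset.univ.erase (f k0)) hdisj hci hmeas
    have hφ : Measurable (fun v : (({f k0} : Finset (Fin n)) → ℝ) =>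
        v ⟨f k0, Finset.mem_singleton_self _⟩) := measurable_pi_apply _
    have hψ : Measurable (fun v : ((Finset.univ.erase (f k0) : Finset (Fin n)) → ℝ) =>
        ∏ k ∈ (Finset.univ.erase k0).attach, v ⟨f k.1, hmemT k⟩) :=
      Finset.measurable_prod _ (fun k _ => measurable_pi_apply _)
    have h3 : Kernel.IndepFun (z (f k0)) Y (condExpKernel μ F) (μ.trim hF) := by
      have hYeq : ((fun v : ((Finset.univ.erase (f k0) : Finset (Fin n)) → ℝ) =>
          ∏ k ∈ (Finset.univ.erase k0).attach, v ⟨f k.1, hmemT k⟩)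
          ∘ (fun ω (i : (Finset.univ.erase (f k0) : Finset (Fin n))) => z i ω)) = Y := by
        funext ω
        simp only [Function.comp_apply, hY]
        rw [← Finset.prod_attach (Finset.univ.erase k0) (fun k => z (f k) ω)]
      rw [← hYeq]
      exact h1.comp hφ hψ
    have hmul : (fun ω => z (f k0) ω * Y ω) = fun ω => ∏ k, z (f k) ω := by
      funext ω
      exact Finset.mul_prod_erase Finset.univ (fun k => z (f k) ω) (Finset.mem_univ k0)
    have hXYint : Integrable (fun ω => z (f k0) ω * Y ω) μ := by
      rw [hmul]; exact hprodint f
    have hvan := vanish hF (hmeas (f k0))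
      (Finset.measurable_prod _ fun k _ => hmeas (f k))
      (aux_integrable_of_pow (hmeas (f k0)) hm (hint (f k0))) hXYint (h0 (f k0)) h3
    rw [← hmul]
    exact hvan
  -- assembly
  set G := (Finset.univ : Finset (Fin (2*m) → Fin n)).filter
      (fun f => ∀ k, 2 ≤ (Finset.univ.filter (fun k' => f k' = f k)).card) with hG
  rw [hexp, ← Finset.sum_filter_add_sum_filter_not Finset.univ
      (fun f => ∀ k, 2 ≤ (Finset.univ.filter (fun k' => f k' = f k)).card)]
  have hbad : ∑ f ∈ Finset.univ.filter
      (fun f : Fin (2*m) → Fin n => ¬ ∀ k, 2 ≤ (Finset.univ.filter (fun k' => f k' = f k)).card),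
      ∫ ω, ∏ k, z (f k) ω ∂μ = 0 := by
    refine Finset.sum_eq_zero fun f hf => ?_
    rw [Finset.mem_filter] at hf
    exact hzero f hf.2
  rw [hbad, add_zero]
  calc ∑ f ∈ G, ∫ ω, ∏ k, z (f k) ω ∂μ ≤ G.card • (2*m*c) :=
        Finset.sum_le_card_nsmul _ _ _ (fun f _ => hbound f)
    _ = (G.card : ℝ) * (2*m*c) := nsmul_eq_mul _ _
    _ ≤ ((m ^ (2*m) * n ^ m : ℕ) : ℝ) * (2*m*c) := by
        have hcard := card_good_le m n hm hn
        have h2mc : (0:ℝ) ≤ 2*m*c := by positivity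
        apply mul_le_mul_of_nonneg_right _ h2mc
        exact_mod_cast hcard
    _ = c * (2*m*(m:ℝ)^(2*m)) * (n : ℝ) ^ m := by push_cast; ring

end AuxStmt0

/-- moment bound for conditionally centered, conditionally independent sums:
if `E(z_i^{2m}) < c` for all `i`, and there is a sigma-algebra `F` with `E(z_i ∣ F) = 0` and
`z_1, …, z_n` conditionally independent given `F`, then
`E{(∑ z_i)^{2m}} ≤ c c_m n^m` for a constant `c_m` depending only on `m`. -/
theorem stmt0 (m : ℕ) (hm : 1 ≤ m) :
    ∃ cm : ℝ, 0 < cm ∧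
      ∀ (Ω : Type) [inst : MeasurableSpace Ω] [StandardBorelSpace Ω]
        (μ : Measure Ω) [IsProbabilityMeasure μ]
        (n : ℕ) (z : Fin n → Ω → ℝ) (c : ℝ),
        0 < c →
        (∀ i, Measurable (z i)) →
        (∀ i, Integrable (fun ω => (z i ω) ^ (2 * m)) μ) →
        (∀ i, ∫ ω, (z i ω) ^ (2 * m) ∂μ < c) →
        (∃ (F : MeasurableSpace Ω) (hF : F ≤ inst),
          (∀ i, μ[z i | F] =ᵐ[μ] fun _ => (0 : ℝ)) ∧
          iCondIndepFun F hF (m := fun _ : Fin n => (inferInstance : MeasurableSpace ℝ)) z μ) →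
        Integrable (fun ω => (∑ i, z i ω) ^ (2 * m)) μ →
        ∫ ω, (∑ i, z i ω) ^ (2 * m) ∂μ ≤ c * cm * (n : ℝ) ^ m := by
  refine ⟨2*m*(m:ℝ)^(2*m), ?_, ?_⟩
  · have hm' : (0:ℝ) < m := by exact_mod_cast hm
    positivity
  · intro Ω inst sb μ pm n z c hc hmeas hint hlt hex _hintsum
    obtain ⟨F, hF, h0, hci⟩ := hex
    exact @main_core m hm Ω F inst sb μ pm n z c hc hmeas hint hlt hF h0 hci
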